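/- There is no factorization of the complete graph K_ℕ on a countably infinite vertex set into factors each isomorphic to the 2-star S_2; that is, FP(S_2) has no solution. -/

import Mathlib

/-- The `k`-star `S_k`: the vertex-disjoint union of `k` countable stars, realized
on the vertex set `Fin k × ℕ`, where `(i, 0)` is the center of the `i`-th star. -/
def kStar (k : ℕ) : SimpleGraph (Fin k × ℕ) :=
  SimpleGraph.fromRel (fun a b => a.1 = b.1 ∧ a.2 = 0 ∧ b.2 ≠ 0)

/-- A set `𝒢` of graphs is a factorization of `Λ`: each member is a (spanning)
subgraph of `Λ` and the edge sets of the members partition the edge set of `Λ`. -/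
def IsFactorizationSet {V : Type*} (Λ : SimpleGraph V) (𝒢 : Set (SimpleGraph V)) : Prop :=
  (∀ Γ ∈ 𝒢, Γ ≤ Λ) ∧ ∀ e ∈ Λ.edgeSet, ∃! Γ, Γ ∈ 𝒢 ∧ e ∈ Γ.edgeSet

open SimpleGraph Finset
open scoped Classical

noncomputable section StarAux

/-- All the structure we extract from a purported `S₂`-factorization of `K_ℕ`. -/
structure StarSetup where
  G : Set (SimpleGraph ℕ)
  fac : ℕ → ℕ → ↥G
  facAdj : ∀ u v : ℕ, u ≠ v → (fac u v).1.Adj u v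
  facUniq : ∀ u v : ℕ, ∀ i : ↥G, i.1.Adj u v → i = fac u v
  c1 : ↥G → ℕ
  c2 : ↥G → ℕ
  cne : ∀ i : ↥G, c1 i ≠ c2 i
  nadj : ∀ i : ↥G, ¬ (i : ↥G).1.Adj (c1 i) (c2 i)
  cxor : ∀ (i : ↥G) (v : ℕ), v ≠ c1 i → v ≠ c2 i → ((i : ↥G).1.Adj v (c1 i) ↔ ¬ (i : ↥G).1.Adj v (c2 i))
  leaf : ∀ (i : ↥G) (v w : ℕ), v ≠ c1 i → v ≠ c2 i → (i : ↥G).1.Adj v w → w = c1 i ∨ w = c2 i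

namespace StarSetup

variable (S : StarSetup)

/-- `v` is a center of the factor `i`. -/
def central (i : ↥S.G) (v : ℕ) : Prop := v = S.c1 i ∨ v = S.c2 i

/-- The center to which a non-central vertex `v` is attached in factor `i`. -/
def ctr (i : ↥S.G) (v : ℕ) : ℕ := if (i : ↥S.G).1.Adj v (S.c1 i) then S.c1 i else S.c2 i

lemma ctr_central (i : ↥S.G) (v : ℕ) : S.central i (S.ctr i v) := by
  unfold ctr central; split <;> simp

lemma ctr_adj (i : ↥S.G) {v : ℕ} (hv : ¬ S.central i v) : (i : ↥S.G).1.Adj v (S.ctr i v) := by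
  unfold central at hv
  push_neg at hv
  unfold ctr
  split
  · assumption
  · rename_i hna
    by_contra hc
    exact hna ((S.cxor i v hv.1 hv.2).mpr hc)

lemma adj_eq_ctr (i : ↥S.G) {v w : ℕ} (hv : ¬ S.central i v) (h : (i : ↥S.G).1.Adj v w) :
    w = S.ctr i v := by
  unfold central at hv; push_neg at hv
  rcases S.leaf i v w hv.1 hv.2 h with rfl | rfl
  · unfold ctr; rw [if_pos h]
  · unfold ctr
    rw [if_neg]
    intro hc
    exact ((S.cxor i v hv.1 hv.2).mp hc) h

/-- Every edge of a factor has exactly one central endpoint. -/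
lemma adj_central_cases (i : ↥S.G) {u w : ℕ} (h : (i : ↥S.G).1.Adj u w) :
    (¬ S.central i u ∧ S.central i w) ∨ (S.central i u ∧ ¬ S.central i w) := by
  by_cases hu : S.central i u <;> by_cases hw : S.central i w
  · exfalso
    rcases hu with rfl | rfl <;> rcases hw with rfl | rfl
    · exact h.ne rfl
    · exact S.nadj i h
    · exact S.nadj i h.symm
    · exact h.ne rfl
  · exact Or.inr ⟨hu, hw⟩
  · exact Or.inl ⟨hu, hw⟩
  · exfalso
    unfold central at hu; push_neg at hu
    exact hw (S.leaf i u w hu.1 hu.2 h)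

lemma adj_central (i : ↥S.G) {u w : ℕ} (h : (i : ↥S.G).1.Adj u w) :
    S.central i u ∨ S.central i w := by
  rcases S.adj_central_cases i h with ⟨_, h2⟩ | ⟨h1, _⟩
  · exact Or.inr h2
  · exact Or.inl h1

lemma central_mem (i : ↥S.G) {v : ℕ} {K : Finset ℕ} (h1 : S.c1 i ∈ K) (h2 : S.c2 i ∈ K)
    (hv : S.central i v) : v ∈ K := by
  rcases hv with rfl | rfl <;> assumption

/-- The number of ordered adjacent pairs of factor `i` inside a finite set `K`
containing both centers of `i` is exactly `2 * (|K| - 2)`. -/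
lemma Dcard (i : ↥S.G) (K : Finset ℕ) (h1 : S.c1 i ∈ K) (h2 : S.c2 i ∈ K) :
    (K.offDiag.filter (fun p => (i : ↥S.G).1.Adj p.1 p.2)).card = 2 * (K.card - 2) := by
  classical
  set T : Finset ℕ := (K.erase (S.c1 i)).erase (S.c2 i) with hTdef
  have hTmem : ∀ v : ℕ, v ∈ T ↔ (v ≠ S.c2 i ∧ v ≠ S.c1 i ∧ v ∈ K) := by
    intro v; simp [hTdef, mem_erase, and_assoc]
  have hTnc : ∀ v ∈ T, ¬ S.central i v := by
    intro v hv hc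
    rcases (hTmem v).mp hv with ⟨hv2, hv1, _⟩
    rcases hc with rfl | rfl
    · exact hv1 rfl
    · exact hv2 rfl
  have hTcard : T.card = K.card - 2 := by
    have hc2 : S.c2 i ∈ K.erase (S.c1 i) := mem_erase.mpr ⟨(S.cne i).symm, h2⟩
    rw [hTdef, card_erase_of_mem hc2, card_erase_of_mem h1]
    omega
  have h2K : 2 ≤ K.card := by
    have : ({S.c1 i, S.c2 i} : Finset ℕ) ⊆ K := by
      intro x hx; simp only [mem_insert, mem_singleton] at hx
      rcases hx with rfl | rfl <;> assumption
    calc 2 = ({S.c1 i, S.c2 i} : Finset ℕ).card := (card_pair (S.cne i)).symm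
    _ ≤ K.card := card_le_card this
  have hset : K.offDiag.filter (fun p => (i : ↥S.G).1.Adj p.1 p.2)
      = T.image (fun v => (v, S.ctr i v)) ∪ T.image (fun v => (S.ctr i v, v)) := by
    ext ⟨u, w⟩
    simp only [mem_filter, mem_offDiag, mem_union, mem_image, Prod.mk.injEq]
    constructor
    · rintro ⟨⟨hu, hw, hne⟩, hadj⟩
      rcases S.adj_central_cases i hadj with ⟨hnu, hcw⟩ | ⟨hcu, hnw⟩
      · left
        refine ⟨u, (hTmem u).mpr ⟨?_, ?_, hu⟩, rfl, (S.adj_eq_ctr i hnu hadj).symm⟩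
        · intro hc; exact hnu (Or.inr hc)
        · intro hc; exact hnu (Or.inl hc)
      · right
        refine ⟨w, (hTmem w).mpr ⟨?_, ?_, hw⟩, (S.adj_eq_ctr i hnw hadj.symm).symm, rfl⟩
        · intro hc; exact hnw (Or.inr hc)
        · intro hc; exact hnw (Or.inl hc)
    · rintro (⟨v, hvT, rfl, rfl⟩ | ⟨v, hvT, rfl, rfl⟩)
      · have hadj := S.ctr_adj i (hTnc v hvT)
        exact ⟨⟨((hTmem v).mp hvT).2.2, S.central_mem i h1 h2 (S.ctr_central i v), hadj.ne⟩, hadj⟩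
      · have hadj := S.ctr_adj i (hTnc v hvT)
        exact ⟨⟨S.central_mem i h1 h2 (S.ctr_central i v), ((hTmem v).mp hvT).2.2,
          hadj.ne'⟩, hadj.symm⟩
  rw [hset, card_union_of_disjoint, card_image_of_injOn, card_image_of_injOn, hTcard]
  · omega
  · intro a _ b _ hab
    exact (Prod.mk.injEq _ _ _ _).mp hab |>.2
  · intro a _ b _ hab
    exact (Prod.mk.injEq _ _ _ _).mp hab |>.1
  · rw [Finset.disjoint_left]
    rintro ⟨u, w⟩ hA hB
    simp only [mem_image, Prod.mk.injEq] at hA hB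
    obtain ⟨v, hvT, rfl, rfl⟩ := hA
    obtain ⟨v', hv'T, hv'1, hv'2⟩ := hB
    exact hTnc v hvT (hv'1 ▸ S.ctr_central i v')

/-- Distinct factors have disjoint adjacent-pair sets. -/
lemma pair_disjoint {i j : ↥S.G} (hij : i ≠ j) {u w : ℕ}
    (hi : (i : ↥S.G).1.Adj u w) (hj : (j : ↥S.G).1.Adj u w) : False := by
  have h1 := S.facUniq u w i hi
  have h2 := S.facUniq u w j hj
  exact hij (h1.trans h2.symm)

/-- Core counting inequality: distinct factors with both centers inside a finite
set `K` are at most `|K|(|K|-1) / (2(|K|-2))` many. -/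
lemma count_le (K : Finset ℕ) (F : Finset ↥S.G)
    (hF : ∀ i ∈ F, S.c1 i ∈ K ∧ S.c2 i ∈ K) :
    F.card * (2 * (K.card - 2)) ≤ K.card * K.card - K.card := by
  classical
  have hdisj : ∀ i ∈ F, ∀ j ∈ F, i ≠ j →
      Disjoint (K.offDiag.filter (fun p => (i : ↥S.G).1.Adj p.1 p.2))
        (K.offDiag.filter (fun p => (j : ↥S.G).1.Adj p.1 p.2)) := by
    intro i _ j _ hij
    rw [Finset.disjoint_left]
    rintro ⟨u, w⟩ hu hw
    simp only [mem_filter] at hu hw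
    exact S.pair_disjoint hij hu.2 hw.2
  calc F.card * (2 * (K.card - 2))
      = ∑ i ∈ F, (K.offDiag.filter (fun p => (i : ↥S.G).1.Adj p.1 p.2)).card := by
        rw [Finset.sum_congr rfl (fun i hi => S.Dcard i K (hF i hi).1 (hF i hi).2)]
        simp [mul_comm]
    _ = (F.biUnion (fun i => K.offDiag.filter (fun p => (i : ↥S.G).1.Adj p.1 p.2))).card :=
        (card_biUnion hdisj).symm
    _ ≤ K.offDiag.card := card_le_card (by
        intro p hp
        simp only [mem_biUnion, mem_filter] at hp
        obtain ⟨i, _, hp, _⟩ := hp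
        exact hp)
    _ = K.card * K.card - K.card := offDiag_card K

/-- The auxiliary "center graph": `x ~ y` iff some factor has centers `x`, `y`. -/
def H : SimpleGraph ℕ := SimpleGraph.fromRel (fun x y => ∃ i : ↥S.G, S.c1 i = x ∧ S.c2 i = y)

lemma hadj_of (i : ↥S.G) : (S.H).Adj (S.c1 i) (S.c2 i) :=
  (SimpleGraph.fromRel_adj _ _ _).mpr ⟨S.cne i, Or.inl ⟨i, rfl, rfl⟩⟩

lemma hadj_ex {x y : ℕ} (h : S.H.Adj x y) :
    ∃ i : ↥S.G, (S.c1 i = x ∧ S.c2 i = y) ∨ (S.c1 i = y ∧ S.c2 i = x) := by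
  rcases (SimpleGraph.fromRel_adj _ _ _).mp h with ⟨-, (⟨i, h1, h2⟩ | ⟨i, h1, h2⟩)⟩
  exacts [⟨i, Or.inl ⟨h1, h2⟩⟩, ⟨i, Or.inr ⟨h1, h2⟩⟩]

end StarSetup

/-- Greedily grown connected lists in the center graph. -/
inductive Chain (S : StarSetup) (a0 : ℕ) : List ℕ → Prop
  | base : Chain S a0 [a0]
  | cons {v u : ℕ} {L : List ℕ} (hc : Chain S a0 L) (hv : v ∉ L) (hu : u ∈ L)
      (ha : S.H.Adj v u) : Chain S a0 (v :: L)

namespace StarSetup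

lemma chain_base_mem {S : StarSetup} {a0 : ℕ} {L : List ℕ} (h : Chain S a0 L) : a0 ∈ L := by
  induction h with
  | base => simp
  | cons hc hv hu ha ih => exact List.mem_cons_of_mem _ ih

lemma chain_nodup {S : StarSetup} {a0 : ℕ} {L : List ℕ} (h : Chain S a0 L) : L.Nodup := by
  induction h with
  | base => simp
  | cons hc hv hu ha ih => exact List.nodup_cons.mpr ⟨by assumption, ih⟩

lemma chain_reachable {S : StarSetup} {a0 : ℕ} {L : List ℕ} (h : Chain S a0 L) :
    ∀ x ∈ L, S.H.Reachable a0 x := by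
  induction h with
  | base => intro x hx; rw [List.mem_singleton] at hx; subst hx; exact SimpleGraph.Reachable.refl _
  | @cons v u L hc hv hu ha ih =>
      intro x hx
      rcases List.mem_cons.mp hx with rfl | hx
      · exact (ih u hu).trans ha.symm.reachable
      · exact ih x hx

lemma chain_factors (S : StarSetup) {a0 : ℕ} {L : List ℕ} (h : Chain S a0 L) :
    ∃ F : Finset ↥S.G, F.card + 1 = L.length ∧
      ∀ i ∈ F, S.c1 i ∈ L.toFinset ∧ S.c2 i ∈ L.toFinset := by
  classical
  induction h with
  | base => exact ⟨∅, by simp⟩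
  | @cons v u L hc hv hu ha ih =>
      obtain ⟨F, hcard, hmem⟩ := ih
      obtain ⟨i, hi⟩ := S.hadj_ex ha
      have hiF : i ∉ F := by
        intro hiF
        have h1 := (hmem i hiF).1
        have h2 := (hmem i hiF).2
        rcases hi with ⟨e1, e2⟩ | ⟨e1, e2⟩
        · exact hv (List.mem_toFinset.mp (e1 ▸ h1))
        · exact hv (List.mem_toFinset.mp (e2 ▸ h2))
      refine ⟨insert i F, ?_, ?_⟩
      · rw [card_insert_of_notMem hiF]
        simp [hcard]
      · intro j hj
        rcases Finset.mem_insert.mp hj with rfl | hj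
        · constructor
          · rcases hi with ⟨e1, e2⟩ | ⟨e1, e2⟩
            · rw [e1]; simp
            · rw [e1]; simp [hu]
          · rcases hi with ⟨e1, e2⟩ | ⟨e1, e2⟩
            · rw [e2]; simp [hu]
            · rw [e2]; simp
        · have h1 := (hmem j hj).1
          have h2 := (hmem j hj).2
          constructor <;> rw [List.mem_toFinset] at *
          · exact List.mem_cons_of_mem _ h1
          · exact List.mem_cons_of_mem _ h2

lemma chain_sub {S : StarSetup} {a0 : ℕ} {L : List ℕ} (h : Chain S a0 L) (h5 : 5 ≤ L.length) :
    ∃ L', Chain S a0 L' ∧ L'.length = 5 := by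
  induction h with
  | base => simp at h5
  | @cons v u L hc hv hu ha ih =>
      rcases Nat.lt_or_ge L.length 5 with hlt | hge
      · refine ⟨v :: L, Chain.cons hc hv hu ha, ?_⟩
        simp only [List.length_cons] at h5 ⊢
        omega
      · exact ih hge

lemma chain_length_le (S : StarSetup) {a0 : ℕ} {L : List ℕ} (h : Chain S a0 L) :
    L.length ≤ 4 := by
  classical
  by_contra hlen
  obtain ⟨L', hL', hlen5⟩ := chain_sub h (by omega)
  obtain ⟨F, hFcard, hFmem⟩ := chain_factors S hL'
  have hKcard : L'.toFinset.card = 5 := by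
    rw [List.toFinset_card_of_nodup (chain_nodup hL'), hlen5]
  have := S.count_le L'.toFinset F hFmem
  rw [hKcard] at this
  omega

lemma chain_cross {S : StarSetup} {L : List ℕ} :
    ∀ {x y : ℕ}, S.H.Walk x y → x ∈ L → y ∉ L → ∃ v u, v ∉ L ∧ u ∈ L ∧ S.H.Adj v u := by
  classical
  intro x y w
  induction w with
  | nil => intro hx hy; exact absurd hx hy
  | @cons a b c hab p ih =>
      intro ha hc
      by_cases hb : b ∈ L
      · exact ih hb hc
      · exact ⟨b, a, hb, ha, hab.symm⟩

/-- Every connected component of the center graph has at most 4 vertices. -/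
lemma component_finset (S : StarSetup) (a0 : ℕ) :
    ∃ K : Finset ℕ, K.card ≤ 4 ∧ ∀ x, x ∈ K ↔ S.H.Reachable a0 x := by
  classical
  set P : ℕ → Prop := fun n => ∃ L, Chain S a0 L ∧ L.length = n with hP
  have hP1 : P 1 := ⟨[a0], Chain.base, rfl⟩
  have hPle : ∀ n, P n → n ≤ 4 := by
    rintro n ⟨L, hL, rfl⟩
    exact chain_length_le S hL
  have hM : P (Nat.findGreatest P 5) := Nat.findGreatest_spec (by omega) hP1
  obtain ⟨L, hL, hLlen⟩ := hM
  refine ⟨L.toFinset, ?_, ?_⟩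
  · rw [List.toFinset_card_of_nodup (chain_nodup hL)]
    exact chain_length_le S hL
  · intro x
    constructor
    · intro hx
      exact chain_reachable hL x (List.mem_toFinset.mp hx)
    · intro hx
      by_contra hxL
      rw [List.mem_toFinset] at hxL
      obtain ⟨w⟩ := hx
      obtain ⟨v, u, hv, hu, ha⟩ := chain_cross w (chain_base_mem hL) hxL
      have hnew : P (Nat.findGreatest P 5 + 1) := by
        refine ⟨v :: L, Chain.cons hL hv hu ha, by simp [hLlen]⟩
      have hle : Nat.findGreatest P 5 + 1 ≤ 5 := by
        have := hPle _ hnew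
        omega
      exact Nat.findGreatest_is_greatest (by omega) hle hnew

/-- Exact counting for a "closed" finite set `K`. -/
lemma count_eq (S : StarSetup) (K : Finset ℕ)
    (hclosed : ∀ i : ↥S.G, (S.c1 i ∈ K ↔ S.c2 i ∈ K)) :
    ∃ F : Finset ↥S.G, (∀ i ∈ F, S.c1 i ∈ K ∧ S.c2 i ∈ K) ∧
      K.card * K.card - K.card = F.card * (2 * (K.card - 2)) := by
  classical
  set f : ℕ × ℕ → ↥S.G := fun p => S.fac p.1 p.2 with hf
  set F := K.offDiag.image f with hF
  have hmemF : ∀ i ∈ F, S.c1 i ∈ K ∧ S.c2 i ∈ K := by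
    intro i hi
    obtain ⟨p, hp, rfl⟩ := mem_image.mp hi
    obtain ⟨h1, h2, hne⟩ := mem_offDiag.mp hp
    have hadj := S.facAdj p.1 p.2 hne
    have hcent : S.central (f p) p.1 ∨ S.central (f p) p.2 := S.adj_central _ hadj
    have hone : S.c1 (f p) ∈ K ∨ S.c2 (f p) ∈ K := by
      rcases hcent with hc | hc <;> rcases hc with e | e
      · exact Or.inl (e ▸ h1)
      · exact Or.inr (e ▸ h1)
      · exact Or.inl (e ▸ h2)
      · exact Or.inr (e ▸ h2)
    rcases hone with hc | hc
    · exact ⟨hc, (hclosed (f p)).mp hc⟩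
    · exact ⟨(hclosed (f p)).mpr hc, hc⟩
  have hcount : K.offDiag.card = ∑ i ∈ F, (K.offDiag.filter (fun p => f p = i)).card :=
    card_eq_sum_card_fiberwise (fun p hp => mem_image_of_mem f hp)
  have hfib : ∀ i ∈ F, (K.offDiag.filter (fun p => f p = i)).card = 2 * (K.card - 2) := by
    intro i hi
    have heq : K.offDiag.filter (fun p => f p = i)
        = K.offDiag.filter (fun p => (i : ↥S.G).1.Adj p.1 p.2) := by
      apply filter_congr
      intro p hp
      obtain ⟨h1, h2, hne⟩ := mem_offDiag.mp hp
      constructor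
      · intro h
        have := S.facAdj p.1 p.2 hne
        rw [show S.fac p.1 p.2 = i from h] at this
        exact this
      · intro hadj
        exact (S.facUniq p.1 p.2 i hadj).symm
    rw [heq]
    exact S.Dcard i K (hmemF i hi).1 (hmemF i hi).2
  rw [Finset.sum_congr rfl hfib, Finset.sum_const, smul_eq_mul, offDiag_card] at hcount
  exact ⟨F, hmemF, hcount⟩

lemma closed_not_two (S : StarSetup) (K : Finset ℕ)
    (hclosed : ∀ i : ↥S.G, (S.c1 i ∈ K ↔ S.c2 i ∈ K)) (h2 : K.card = 2) : False := by
  classical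
  obtain ⟨x, y, hxy, rfl⟩ := card_eq_two.mp h2
  have hadj := S.facAdj x y hxy
  set i := S.fac x y with hi
  have hcent : S.central i x ∨ S.central i y := S.adj_central i hadj
  have hone : S.c1 i ∈ ({x, y} : Finset ℕ) ∨ S.c2 i ∈ ({x, y} : Finset ℕ) := by
    rcases hcent with hc | hc <;> rcases hc with e | e
    · exact Or.inl (by rw [← e]; simp)
    · exact Or.inr (by rw [← e]; simp)
    · exact Or.inl (by rw [← e]; simp)
    · exact Or.inr (by rw [← e]; simp)
  have hboth : S.c1 i ∈ ({x, y} : Finset ℕ) ∧ S.c2 i ∈ ({x, y} : Finset ℕ) := by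
    rcases hone with hc | hc
    · exact ⟨hc, (hclosed i).mp hc⟩
    · exact ⟨(hclosed i).mpr hc, hc⟩
  simp only [mem_insert, mem_singleton] at hboth
  rcases hboth.1 with e1 | e1 <;> rcases hboth.2 with e2 | e2
  · exact S.cne i (e1.trans e2.symm)
  · exact S.nadj i (by rw [e1, e2]; exact hadj)
  · exact S.nadj i (by rw [e1, e2]; exact hadj.symm)
  · exact S.cne i (e1.trans e2.symm)

/-- get a closed component containing a given center, with `|K| ∈ {3,4}` and
exactly 3 factors centered inside it. -/
lemma get_component (S : StarSetup) (i0 : ↥S.G) (z : ℕ) (hz : S.central i0 z) :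
    ∃ K : Finset ℕ, (∀ x, x ∈ K ↔ S.H.Reachable z x) ∧
      (∀ i : ↥S.G, (S.c1 i ∈ K ↔ S.c2 i ∈ K)) ∧ (K.card = 3 ∨ K.card = 4) ∧
      ∃ F : Finset ↥S.G, (∀ i ∈ F, S.c1 i ∈ K ∧ S.c2 i ∈ K) ∧ F.card = 3 := by
  classical
  obtain ⟨K, hK4, hKmem⟩ := component_finset S z
  have hclosed : ∀ i : ↥S.G, (S.c1 i ∈ K ↔ S.c2 i ∈ K) := by
    intro i
    constructor
    · intro h
      rw [hKmem] at h ⊢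
      exact h.trans (S.hadj_of i).reachable
    · intro h
      rw [hKmem] at h ⊢
      exact h.trans (S.hadj_of i).symm.reachable
  have hzK : z ∈ K := (hKmem z).mpr (SimpleGraph.Reachable.refl z)
  have hc12 : S.c1 i0 ∈ K ∧ S.c2 i0 ∈ K := by
    rcases hz with e | e
    · have h1 : S.c1 i0 ∈ K := e ▸ hzK
      exact ⟨h1, (hclosed i0).mp h1⟩
    · have h2 : S.c2 i0 ∈ K := e ▸ hzK
      exact ⟨(hclosed i0).mpr h2, h2⟩
  have h2K : 2 ≤ K.card := by
    have hsub : ({S.c1 i0, S.c2 i0} : Finset ℕ) ⊆ K := by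
      intro x hx
      simp only [mem_insert, mem_singleton] at hx
      rcases hx with rfl | rfl
      exacts [hc12.1, hc12.2]
    calc 2 = ({S.c1 i0, S.c2 i0} : Finset ℕ).card := (card_pair (S.cne i0)).symm
      _ ≤ K.card := card_le_card hsub
  have h3K : 3 ≤ K.card := by
    rcases Nat.lt_or_ge K.card 3 with h | h
    · exfalso; exact closed_not_two S K hclosed (by omega)
    · exact h
  obtain ⟨F, hFmem, hFeq⟩ := count_eq S K hclosed
  have hk34 : K.card = 3 ∨ K.card = 4 := by omega
  have hF3 : F.card = 3 := by
    rcases hk34 with h | h <;> rw [h] at hFeq <;> omega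
  exact ⟨K, hKmem, hclosed, hk34, F, hFmem, hF3⟩

/-- The main contradiction. -/
lemma setup_false (S : StarSetup) : False := by
  classical
  -- first component
  obtain ⟨K, hKmem, hKcl, hKcard, F, hFmem, hF3⟩ :=
    get_component S (S.fac 0 1) (S.c1 (S.fac 0 1)) (Or.inl rfl)
  -- a center outside K
  set u : ℕ := K.sup id + 1 with hu
  set v : ℕ := K.sup id + 2 with hv
  have huK : u ∉ K := fun h => by have := Finset.le_sup (f := id) h; simp only [id] at this; omega
  have hvK : v ∉ K := fun h => by have := Finset.le_sup (f := id) h; simp only [id] at this; omega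
  have huv : u ≠ v := by omega
  set j := S.fac u v with hj
  have hadjj : (j : ↥S.G).1.Adj u v := S.facAdj u v huv
  have hcentj : S.central j u ∨ S.central j v := S.adj_central j hadjj
  obtain ⟨z, hzcent, hzK⟩ : ∃ z, S.central j z ∧ z ∉ K := by
    rcases hcentj with h | h
    exacts [⟨u, h, huK⟩, ⟨v, h, hvK⟩]
  obtain ⟨K', hK'mem, hK'cl, hK'card, F', hF'mem, hF'3⟩ := get_component S j z hzcent
  -- disjointness
  have hzK' : z ∈ K' := (hK'mem z).mpr (SimpleGraph.Reachable.refl z)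
  have hdisjK : Disjoint K K' := by
    rw [Finset.disjoint_left]
    intro x hxK hxK'
    have h1 := (hKmem x).mp hxK
    have h2 := (hK'mem x).mp hxK'
    exact hzK ((hKmem z).mpr (h1.trans h2.symm))
  have hdisjF : Disjoint F F' := by
    rw [Finset.disjoint_left]
    intro i hiF hiF'
    exact (Finset.disjoint_left.mp hdisjK) (hFmem i hiF).1 (hF'mem i hiF').1
  -- final counting on K ×ˢ K'
  set B := K ×ˢ K' with hB
  set E : ↥S.G → Finset (ℕ × ℕ) := fun i => B.filter (fun p => (i : ↥S.G).1.Adj p.1 p.2) with hE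
  have hEdisj : ∀ i ∈ F ∪ F', ∀ i' ∈ F ∪ F', i ≠ i' → Disjoint (E i) (E i') := by
    intro i _ i' _ hne
    rw [Finset.disjoint_left]
    rintro ⟨a, b⟩ h1 h2
    simp only [hE, mem_filter] at h1 h2
    exact S.pair_disjoint hne h1.2 h2.2
  have hsum_le : ∑ i ∈ F ∪ F', (E i).card ≤ B.card := by
    rw [← card_biUnion hEdisj]
    apply card_le_card
    intro p hp
    simp only [mem_biUnion, hE, mem_filter] at hp
    obtain ⟨i, _, hp, _⟩ := hp
    exact hp
  have hlow1 : ∀ i ∈ F, K'.card ≤ (E i).card := by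
    intro i hi
    have hsub : K'.image (fun x => (S.ctr i x, x)) ⊆ E i := by
      intro p hp
      obtain ⟨x, hx, rfl⟩ := mem_image.mp hp
      have hxnc : ¬ S.central i x := by
        intro hc
        exact (Finset.disjoint_left.mp hdisjK)
          (S.central_mem i (hFmem i hi).1 (hFmem i hi).2 hc) hx
      have hadj := S.ctr_adj i hxnc
      simp only [hE, mem_filter, hB, mem_product]
      exact ⟨⟨S.central_mem i (hFmem i hi).1 (hFmem i hi).2 (S.ctr_central i x), hx⟩, hadj.symm⟩
    calc K'.card = (K'.image (fun x => (S.ctr i x, x))).card := by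
          rw [card_image_of_injOn]
          intro a _ b _ hab
          exact ((Prod.mk.injEq _ _ _ _).mp hab).2
      _ ≤ (E i).card := card_le_card hsub
  have hlow2 : ∀ i ∈ F', K.card ≤ (E i).card := by
    intro i hi
    have hsub : K.image (fun x => (x, S.ctr i x)) ⊆ E i := by
      intro p hp
      obtain ⟨x, hx, rfl⟩ := mem_image.mp hp
      have hxnc : ¬ S.central i x := by
        intro hc
        exact (Finset.disjoint_left.mp hdisjK) hx
          (S.central_mem i (hF'mem i hi).1 (hF'mem i hi).2 hc)
      have hadj := S.ctr_adj i hxnc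
      simp only [hE, mem_filter, hB, mem_product]
      exact ⟨⟨hx, S.central_mem i (hF'mem i hi).1 (hF'mem i hi).2 (S.ctr_central i x)⟩, hadj⟩
    calc K.card = (K.image (fun x => (x, S.ctr i x))).card := by
          rw [card_image_of_injOn]
          intro a _ b _ hab
          exact ((Prod.mk.injEq _ _ _ _).mp hab).1
      _ ≤ (E i).card := card_le_card hsub
  have hBcard : B.card = K.card * K'.card := card_product K K'
  have hmain : 3 * K'.card + 3 * K.card ≤ K.card * K'.card := by
    have hsplit : ∑ i ∈ F ∪ F', (E i).card
        = ∑ i ∈ F, (E i).card + ∑ i ∈ F', (E i).card := sum_union hdisjF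
    have hs1 : F.card * K'.card ≤ ∑ i ∈ F, (E i).card := by
      calc F.card * K'.card = ∑ _i ∈ F, K'.card := by rw [Finset.sum_const, smul_eq_mul]
        _ ≤ ∑ i ∈ F, (E i).card := Finset.sum_le_sum hlow1
    have hs2 : F'.card * K.card ≤ ∑ i ∈ F', (E i).card := by
      calc F'.card * K.card = ∑ _i ∈ F', K.card := by rw [Finset.sum_const, smul_eq_mul]
        _ ≤ ∑ i ∈ F', (E i).card := Finset.sum_le_sum hlow2
    rw [hF3] at hs1
    rw [hF'3] at hs2
    omega
  rcases hKcard with h | h <;> rcases hK'card with h' | h' <;> rw [h, h'] at hmain <;> omega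

end StarSetup

section Extraction

lemma kStar_not_adj_centers (j j' : Fin 2) : ¬ (kStar 2).Adj (j, 0) (j', 0) := by
  simp [kStar, SimpleGraph.fromRel_adj]

lemma kStar_adj_center (j j' : Fin 2) (n : ℕ) (hn : n ≠ 0) :
    (kStar 2).Adj (j, n) (j', 0) ↔ j' = j := by
  simp [kStar, SimpleGraph.fromRel_adj, hn, Prod.ext_iff]

lemma kStar_leaf (j : Fin 2) (n : ℕ) (hn : n ≠ 0) (b : Fin 2 × ℕ)
    (h : (kStar 2).Adj (j, n) b) : b = (j, 0) := by
  simp only [kStar, SimpleGraph.fromRel_adj] at h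
  obtain ⟨hne, h | h⟩ := h
  · exact absurd h.2.1 hn
  · obtain ⟨h1, h2, h3⟩ := h
    rw [Prod.ext_iff]
    exact ⟨h1, h2⟩

/-- From an isomorphism with `S₂` we extract the two centers and their properties. -/
lemma star_pair (Γ : SimpleGraph ℕ) (e : kStar 2 ≃g Γ) :
    ∃ c1 c2 : ℕ, c1 ≠ c2 ∧ ¬ Γ.Adj c1 c2 ∧
      (∀ v, v ≠ c1 → v ≠ c2 → (Γ.Adj v c1 ↔ ¬ Γ.Adj v c2)) ∧
      (∀ v w, v ≠ c1 → v ≠ c2 → Γ.Adj v w → w = c1 ∨ w = c2) := by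
  classical
  refine ⟨e (0, 0), e (1, 0), ?_, ?_, ?_, ?_⟩
  · intro h
    have := e.toEquiv.injective h
    simp [Prod.ext_iff] at this
  · intro h
    exact kStar_not_adj_centers 0 1 (e.map_adj_iff.mp h)
  · intro v hv1 hv2
    obtain ⟨a, rfl⟩ : ∃ a, e a = v := ⟨e.symm v, e.apply_symm_apply v⟩
    obtain ⟨j, n⟩ := a
    have hn : n ≠ 0 := by
      intro h; subst h
      fin_cases j
      · exact hv1 rfl
      · exact hv2 rfl
    rw [e.map_adj_iff, e.map_adj_iff, kStar_adj_center _ _ _ hn, kStar_adj_center _ _ _ hn]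
    fin_cases j <;> simp
  · intro v w hv1 hv2 hadj
    obtain ⟨a, rfl⟩ : ∃ a, e a = v := ⟨e.symm v, e.apply_symm_apply v⟩
    obtain ⟨b, rfl⟩ : ∃ b, e b = w := ⟨e.symm w, e.apply_symm_apply w⟩
    obtain ⟨j, n⟩ := a
    have hn : n ≠ 0 := by
      intro h; subst h
      fin_cases j
      · exact hv1 rfl
      · exact hv2 rfl
    have hb := kStar_leaf j n hn b (e.map_adj_iff.mp hadj)
    subst hb
    fin_cases j
    · exact Or.inl rfl
    · exact Or.inr rfl

end Extraction

end StarAux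

/-- there is no factorization of the complete graph `K_ℕ` into
factors each isomorphic to the `2`-star `S₂`, i.e. `FP(S₂)` has no solution. -/
theorem stmt_14 :
    ¬ ∃ 𝒢 : Set (SimpleGraph ℕ), IsFactorizationSet (⊤ : SimpleGraph ℕ) 𝒢 ∧
        ∀ Γ ∈ 𝒢, Nonempty (kStar 2 ≃g Γ) := by
  classical
  rintro ⟨G, ⟨hsub, hpart⟩, hiso⟩
  have hfac : ∀ u v : ℕ, u ≠ v → ∃ i : ↥G, i.1.Adj u v ∧ ∀ j : ↥G, j.1.Adj u v → j = i := by
    intro u v huv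
    obtain ⟨Γ, ⟨hΓG, hΓe⟩, huniq⟩ := hpart s(u, v) (by
      rw [SimpleGraph.mem_edgeSet]
      exact huv)
    refine ⟨⟨Γ, hΓG⟩, (SimpleGraph.mem_edgeSet Γ).mp hΓe, ?_⟩
    intro j hj
    exact Subtype.ext (huniq j.1 ⟨j.2, (SimpleGraph.mem_edgeSet _).mpr hj⟩)
  set fac : ℕ → ℕ → ↥G := fun u v =>
    if h : u ≠ v then (hfac u v h).choose else (hfac 0 1 (by omega)).choose with hfacdef
  have hfacAdj : ∀ u v : ℕ, u ≠ v → (fac u v).1.Adj u v := by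
    intro u v huv
    rw [hfacdef]
    simp only [dif_pos huv]
    exact (hfac u v huv).choose_spec.1
  have hfacUniq : ∀ u v : ℕ, ∀ i : ↥G, i.1.Adj u v → i = fac u v := by
    intro u v i hi
    have huv : u ≠ v := hi.ne
    rw [hfacdef]
    simp only [dif_pos huv]
    exact (hfac u v huv).choose_spec.2 i hi
  have hcent : ∀ i : ↥G, ∃ p : ℕ × ℕ, p.1 ≠ p.2 ∧ ¬ i.1.Adj p.1 p.2 ∧
      (∀ v, v ≠ p.1 → v ≠ p.2 → (i.1.Adj v p.1 ↔ ¬ i.1.Adj v p.2)) ∧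
      (∀ v w, v ≠ p.1 → v ≠ p.2 → i.1.Adj v w → w = p.1 ∨ w = p.2) := by
    intro i
    obtain ⟨e⟩ := hiso i.1 i.2
    obtain ⟨c1, c2, h1, h2, h3, h4⟩ := star_pair i.1 e
    exact ⟨(c1, c2), h1, h2, h3, h4⟩
  exact StarSetup.setup_false
    { G := G
      fac := fac
      facAdj := hfacAdj
      facUniq := hfacUniq
      c1 := fun i => ((hcent i).choose).1
      c2 := fun i => ((hcent i).choose).2
      cne := fun i => ((hcent i).choose_spec).1
      nadj := fun i => ((hcent i).choose_spec).2.1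
      cxor := fun i => ((hcent i).choose_spec).2.2.1
      leaf := fun i => ((hcent i).choose_spec).2.2.2 }
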